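/- arXiv:2105.14033 — 2 statements merged into one kernel-verified Lean document; each statement's English description precedes it below -/
import Mathlib

section
/- Suppose the sequences (X^k, y^k, S^k) (k ≥ 1), X^0 ∈ S^n_+, σ_k (k ≥ 0) and ε_k satisfy the iPGM conditions, with ‖y^k‖ ≤ M for all k ≥ 1. Let X* be primal optimal and (y*, S*) dual feasible with ⟨C, X*⟩ = ⟨b, y*⟩ (zero duality gap). Then for every k ≥ 2: ‖A*y^k + S^k − C‖ ≤ (1/√σ_k) · sqrt( (1/(k−1)) ( (1/(2σ_0))‖X^0 − X*‖² + 2M Σ_{i=1}^{k−1} i ε_i ) + ‖y*‖ ε_k + M (ε_{k−1} + ε_k) ). -/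
set_option autoImplicit false
open Matrix Finset Filter
open scoped RealInnerProductSpace
noncomputable section

/-- The trace inner product `⟨X, Y⟩ = trace (Xᵀ * Y)` on real `n × n` matrices. -/
def mInner {n : ℕ} (X Y : Matrix (Fin n) (Fin n) ℝ) : ℝ := (Xᵀ * Y).trace

/-- The Frobenius norm induced by the trace inner product. -/
def mNorm {n : ℕ} (X : Matrix (Fin n) (Fin n) ℝ) : ℝ := Real.sqrt (mInner X X)

variable {n : ℕ}

lemma mInner_comm (X Y : Matrix (Fin n) (Fin n) ℝ) : mInner X Y = mInner Y X := by
  unfold mInner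
  rw [← Matrix.trace_transpose, Matrix.transpose_mul, Matrix.transpose_transpose]

lemma mInner_add_left (X Y Z : Matrix (Fin n) (Fin n) ℝ) :
    mInner (X + Y) Z = mInner X Z + mInner Y Z := by
  unfold mInner; rw [Matrix.transpose_add, Matrix.add_mul, Matrix.trace_add]

lemma mInner_add_right (X Y Z : Matrix (Fin n) (Fin n) ℝ) :
    mInner X (Y + Z) = mInner X Y + mInner X Z := by
  unfold mInner; rw [Matrix.mul_add, Matrix.trace_add]

lemma mInner_smul_left (c : ℝ) (X Y : Matrix (Fin n) (Fin n) ℝ) :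
    mInner (c • X) Y = c * mInner X Y := by
  unfold mInner; rw [Matrix.transpose_smul, Matrix.smul_mul, Matrix.trace_smul]; rfl

lemma mInner_smul_right (c : ℝ) (X Y : Matrix (Fin n) (Fin n) ℝ) :
    mInner X (c • Y) = c * mInner X Y := by
  unfold mInner; rw [Matrix.mul_smul, Matrix.trace_smul]; rfl

lemma mInner_neg_left (X Y : Matrix (Fin n) (Fin n) ℝ) : mInner (-X) Y = - mInner X Y := by
  have := mInner_smul_left (-1) X Y; simpa using this

lemma mInner_sub_left (X Y Z : Matrix (Fin n) (Fin n) ℝ) :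
    mInner (X - Y) Z = mInner X Z - mInner Y Z := by
  rw [sub_eq_add_neg, mInner_add_left, mInner_neg_left]; ring

lemma mInner_sub_right (X Y Z : Matrix (Fin n) (Fin n) ℝ) :
    mInner X (Y - Z) = mInner X Y - mInner X Z := by
  rw [mInner_comm, mInner_sub_left, mInner_comm Y X, mInner_comm Z X]

lemma mInner_self_nonneg (X : Matrix (Fin n) (Fin n) ℝ) : 0 ≤ mInner X X := by
  unfold mInner
  rw [Matrix.trace]
  refine Finset.sum_nonneg fun i _ => ?_
  rw [Matrix.diag_apply, Matrix.mul_apply]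
  exact Finset.sum_nonneg fun j _ => by simp [Matrix.transpose_apply, mul_self_nonneg]

lemma mNorm_nonneg (X : Matrix (Fin n) (Fin n) ℝ) : 0 ≤ mNorm X := Real.sqrt_nonneg _

lemma mNorm_sq (X : Matrix (Fin n) (Fin n) ℝ) : mNorm X ^ 2 = mInner X X :=
  Real.sq_sqrt (mInner_self_nonneg X)

open scoped MatrixOrder in
lemma psd_exists_eq_conjTranspose_mul_self {A : Matrix (Fin n) (Fin n) ℝ}
    (hA : A.PosSemidef) : ∃ B : Matrix (Fin n) (Fin n) ℝ, A = Bᴴ * B := by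
  have h0 : (0 : Matrix (Fin n) (Fin n) ℝ) ≤ A := hA.nonneg
  refine ⟨CFC.sqrt A, ?_⟩
  have hs : IsSelfAdjoint (CFC.sqrt A) := (CFC.sqrt_nonneg A).isSelfAdjoint
  rw [← Matrix.star_eq_conjTranspose, hs.star_eq, CFC.sqrt_mul_sqrt_self A h0]

lemma mInner_psd_nonneg {X S : Matrix (Fin n) (Fin n) ℝ} (hX : X.PosSemidef)
    (hS : S.PosSemidef) : 0 ≤ mInner X S := by
  obtain ⟨P, hP⟩ := psd_exists_eq_conjTranspose_mul_self hX
  obtain ⟨Q, hQ⟩ := psd_exists_eq_conjTranspose_mul_self hS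
  rw [Matrix.conjTranspose_eq_transpose_of_trivial] at hP hQ
  have hXsymm : Xᵀ = X := by rw [hP]; simp [Matrix.transpose_mul]
  have key : mInner X S = mInner (P * Qᵀ) (P * Qᵀ) := by
    unfold mInner
    rw [hXsymm, hP, hQ]
    rw [show Pᵀ * P * (Qᵀ * Q) = Pᵀ * (P * (Qᵀ * Q)) from by simp [Matrix.mul_assoc],
      Matrix.trace_mul_comm,
      show P * (Qᵀ * Q) * Pᵀ = (P * Qᵀ) * (Q * Pᵀ) from by simp [Matrix.mul_assoc],
      Matrix.trace_mul_comm, Matrix.transpose_mul, Matrix.transpose_transpose]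
  rw [key]
  exact mInner_self_nonneg _

-- polarization
lemma mInner_eq_norms (U V : Matrix (Fin n) (Fin n) ℝ) :
    mInner U V = (mNorm U ^ 2 + mNorm V ^ 2 - mNorm (U - V) ^ 2) / 2 := by
  rw [mNorm_sq, mNorm_sq, mNorm_sq, mInner_sub_left, mInner_sub_right, mInner_sub_right,
    mInner_comm V U]
  ring

lemma mNorm_smul_nonneg {c : ℝ} (hc : 0 ≤ c) (X : Matrix (Fin n) (Fin n) ℝ) :
    mNorm (c • X) = c * mNorm X := by
  unfold mNorm
  rw [mInner_smul_left, mInner_smul_right, ← mul_assoc, Real.sqrt_mul (by positivity),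
    Real.sqrt_mul_self hc]

lemma mInner_neg_right (X Y : Matrix (Fin n) (Fin n) ℝ) : mInner X (-Y) = - mInner X Y := by
  rw [mInner_comm, mInner_neg_left, mInner_comm]

lemma mNorm_sub_comm (U V : Matrix (Fin n) (Fin n) ℝ) : mNorm (U - V) = mNorm (V - U) := by
  unfold mNorm
  rw [show V - U = -(U - V) from by abel, mInner_neg_left, mInner_neg_right, neg_neg]

lemma my_sum_Icc_succ_top {a b : ℕ} (h : a ≤ b + 1) (f : ℕ → ℝ) :
    ∑ i ∈ Finset.Icc a (b+1), f i = (∑ i ∈ Finset.Icc a b, f i) + f (b+1) := by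
  rw [← Finset.insert_Icc_right_eq_Icc_add_one h, Finset.sum_insert (by simp)]
  ring

/-- `ℝ^m` with the Euclidean inner product. -/
abbrev Vec (m : ℕ) := EuclideanSpace ℝ (Fin m)

/-- dual infeasibility bound for the inexact projected gradient method. -/
theorem ipgm_dual_infeasibility_bound {n m : ℕ}
    (A : Matrix (Fin n) (Fin n) ℝ →ₗ[ℝ] Vec m)
    (Aadj : Vec m →ₗ[ℝ] Matrix (Fin n) (Fin n) ℝ)
    (hadj : ∀ (X : Matrix (Fin n) (Fin n) ℝ) (ξ : Vec m), ⟪A X, ξ⟫ = mInner X (Aadj ξ))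
    (b : Vec m) (C : Matrix (Fin n) (Fin n) ℝ) (hC : C.IsSymm)
    (X : ℕ → Matrix (Fin n) (Fin n) ℝ) (y : ℕ → Vec m)
    (S : ℕ → Matrix (Fin n) (Fin n) ℝ)
    (σ : ℕ → ℝ) (ε : ℕ → ℝ)
    -- iPGM conditions
    (hX0 : (X 0).PosSemidef)
    (hXpsd : ∀ k, 1 ≤ k → (X k).PosSemidef)
    (hSpsd : ∀ k, 1 ≤ k → (S k).PosSemidef)
    (hσpos : ∀ k, 0 < σ k) (hσmono : Monotone σ)
    (hεnonneg : ∀ k, 0 ≤ ε k)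
    (hfeas : ∀ k, 1 ≤ k → ‖A (X k) - b‖ ≤ ε k)
    (hdual : ∀ k, 1 ≤ k → Aadj (y k) + S k - C = (1 / σ k) • (X k - X (k - 1)))
    (hcomp : ∀ k, 1 ≤ k → mInner (X k) (S k) = 0)
    -- boundedness of the dual multipliers
    (M : ℝ) (hM : 0 < M) (hy : ∀ k, 1 ≤ k → ‖y k‖ ≤ M)
    -- a primal optimal solution
    (Xstar : Matrix (Fin n) (Fin n) ℝ) (hXstar : Xstar.PosSemidef)
    (hAXstar : A Xstar = b)
    (hXstarOpt : ∀ X' : Matrix (Fin n) (Fin n) ℝ, X'.PosSemidef → A X' = b →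
      mInner C Xstar ≤ mInner C X')
    -- a dual feasible pair with zero duality gap
    (ystar : Vec m) (Sstar : Matrix (Fin n) (Fin n) ℝ)
    (hdualfeas : Aadj ystar + Sstar = C) (hSstar : Sstar.PosSemidef)
    (hgap : mInner C Xstar = ⟪b, ystar⟫) :
    ∀ k, 2 ≤ k →
      mNorm (Aadj (y k) + S k - C) ≤
        (1 / Real.sqrt (σ k)) *
          Real.sqrt ((1 / ((k : ℝ) - 1)) * ((1 / (2 * σ 0)) * mNorm (X 0 - Xstar) ^ 2
              + 2 * M * ∑ i ∈ Finset.Icc 1 (k - 1), (i : ℝ) * ε i)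
            + ‖ystar‖ * ε k + M * (ε (k - 1) + ε k)) := by
  -- abbreviations
  obtain ⟨th, hth⟩ : ∃ th : ℕ → ℝ, ∀ j, th j = mInner C (X j) - mInner C Xstar :=
    ⟨_, fun _ => rfl⟩
  obtain ⟨D, hD⟩ : ∃ D : ℕ → ℝ, ∀ j, D j = (1 / (2 * σ j)) * mNorm (X j - Xstar) ^ 2 :=
    ⟨_, fun _ => rfl⟩
  have hXpsd' : ∀ i : ℕ, (X i).PosSemidef := by
    intro i
    rcases Nat.eq_zero_or_pos i with h | h
    · simpa [h] using hX0
    · exact hXpsd i h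
  -- inner product with y k bound
  have hip : ∀ i, 1 ≤ i → |⟪A (X i) - b, y i⟫| ≤ ε i * M := by
    intro i hi
    exact le_trans (abs_real_inner_le_norm _ _)
      (mul_le_mul (hfeas i hi) (hy i hi) (norm_nonneg _) (hεnonneg i))
  -- h1 : prox step inequality
  have h1 : ∀ i, 1 ≤ i → th i + (1 / (2 * σ i)) *
      (mNorm (X i - X (i-1)) ^ 2 + mNorm (X i - Xstar) ^ 2 - mNorm (X (i-1) - Xstar) ^ 2)
      ≤ M * ε i := by
    intro i hi
    have keyE : mInner (Aadj (y i) + S i - C) (Xstar - X i)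
        = (1 / σ i) * mInner (X i - X (i-1)) (Xstar - X i) := by
      rw [hdual i hi, mInner_smul_left]
    rw [mInner_sub_left, mInner_add_left] at keyE
    have ht1 : -(ε i * M) ≤ mInner (Aadj (y i)) (Xstar - X i) := by
      rw [mInner_comm, ← hadj]
      rw [show A (Xstar - X i) = -(A (X i) - b) from by rw [map_sub, hAXstar]; abel,
        inner_neg_left]
      linarith [(abs_le.mp (hip i hi)).2]
    have ht2 : 0 ≤ mInner (S i) (Xstar - X i) := by
      rw [mInner_sub_right]
      have h0 : mInner (S i) (X i) = 0 := by rw [mInner_comm]; exact hcomp i hi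
      have := mInner_psd_nonneg (hSpsd i hi) hXstar
      linarith
    have ht3 : mInner C (Xstar - X i) = -(th i) := by
      rw [mInner_sub_right, hth i]; ring
    have hcos : mInner (X i - X (i-1)) (Xstar - X i)
        = -((mNorm (X i - X (i-1)) ^ 2 + mNorm (X i - Xstar) ^ 2
            - mNorm (X (i-1) - Xstar) ^ 2) / 2) := by
      rw [show Xstar - X i = -(X i - Xstar) from by abel, mInner_neg_right, mInner_eq_norms,
        show (X i - X (i-1)) - (X i - Xstar) = Xstar - X (i-1) from by abel,
        mNorm_sub_comm Xstar (X (i-1))]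
    rw [ht3, hcos] at keyE
    have hs := hσpos i
    have hhalf : 1 / (2 * σ i) = (1 / σ i) / 2 := by
      rw [one_div, one_div, mul_inv]
      ring
    rw [hhalf]
    linarith
  -- h2 : lower bound on th via dual feasibility
  have h2 : ∀ i, 1 ≤ i → -(‖ystar‖ * ε i) ≤ th i := by
    intro i hi
    have hC' : mInner C (X i) = ⟪A (X i), ystar⟫ + mInner Sstar (X i) := by
      rw [← hdualfeas, mInner_add_left, hadj, mInner_comm (X i) (Aadj ystar)]
    have hpos : 0 ≤ mInner Sstar (X i) := mInner_psd_nonneg hSstar (hXpsd' i)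
    have hineq : -(ε i * ‖ystar‖) ≤ ⟪A (X i), ystar⟫ - ⟪b, ystar⟫ := by
      rw [← inner_sub_left]
      have hcs := abs_real_inner_le_norm (A (X i) - b) ystar
      have hb2 : ‖A (X i) - b‖ * ‖ystar‖ ≤ ε i * ‖ystar‖ :=
        mul_le_mul_of_nonneg_right (hfeas i hi) (norm_nonneg _)
      linarith [(abs_le.mp (le_trans hcs hb2)).1]
    rw [hth i, hgap, hC']
    nlinarith [hεnonneg i, norm_nonneg ystar]
  -- h3 : approximate monotonicity
  have h3 : ∀ i, 2 ≤ i → th i + (1 / σ i) * mNorm (X i - X (i-1)) ^ 2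
      ≤ th (i-1) + M * (ε (i-1) + ε i) := by
    intro i hi
    have hi1 : 1 ≤ i := by omega
    have hi1' : 1 ≤ i - 1 := by omega
    have keyE : mInner (Aadj (y i) + S i - C) (X (i-1) - X i)
        = (1 / σ i) * mInner (X i - X (i-1)) (X (i-1) - X i) := by
      rw [hdual i hi1, mInner_smul_left]
    rw [mInner_sub_left, mInner_add_left] at keyE
    have hnn : mInner (X i - X (i-1)) (X (i-1) - X i) = -(mNorm (X i - X (i-1)) ^ 2) := by
      rw [show X (i-1) - X i = -(X i - X (i-1)) from by abel, mInner_neg_right, mNorm_sq]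
    have ht1 : -(M * (ε (i-1) + ε i)) ≤ mInner (Aadj (y i)) (X (i-1) - X i) := by
      rw [mInner_comm, ← hadj]
      rw [show A (X (i-1) - X i) = (A (X (i-1)) - b) - (A (X i) - b) from by
        rw [map_sub]; abel, inner_sub_left]
      have c1 := abs_le.mp (le_trans (abs_real_inner_le_norm (A (X (i-1)) - b) (y i))
        (mul_le_mul (hfeas (i-1) hi1') (hy i hi1) (norm_nonneg _) (hεnonneg (i-1))))
      have c2 := abs_le.mp (hip i hi1)
      have := c1.1
      have := c2.2
      nlinarith
    have ht2 : 0 ≤ mInner (S i) (X (i-1) - X i) := by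
      rw [mInner_sub_right]
      have h0 : mInner (S i) (X i) = 0 := by rw [mInner_comm]; exact hcomp i hi1
      have := mInner_psd_nonneg (hSpsd i hi1) (hXpsd' (i-1))
      linarith
    have ht3 : mInner C (X (i-1) - X i) = th (i-1) - th i := by
      rw [mInner_sub_right, hth (i-1), hth i]; ring
    rw [ht3, hnn] at keyE
    linarith
  -- h1' : telescoping form with monotone step sizes
  have h1' : ∀ i, 1 ≤ i → th i ≤ M * ε i + D (i-1) - D i := by
    intro i hi
    have key := h1 i hi
    have hs := hσpos i
    have hs' := hσpos (i-1)
    have hmono : 1 / (2 * σ i) ≤ 1 / (2 * σ (i-1)) := by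
      apply one_div_le_one_div_of_le (by linarith)
      have := hσmono (Nat.sub_le i 1)
      linarith
    have ha := sq_nonneg (mNorm (X i - X (i-1)))
    have hc := sq_nonneg (mNorm (X (i-1) - Xstar))
    have hb := sq_nonneg (mNorm (X i - Xstar))
    have hpos : 0 < 1 / (2 * σ i) := by positivity
    rw [hD i, hD (i-1)]
    nlinarith [mul_le_mul_of_nonneg_right hmono hc]
  -- summed telescoping bound
  have hsumD : ∀ K, 1 ≤ K → ∑ i ∈ Finset.Icc 1 K, th i
      ≤ D 0 - D K + M * ∑ i ∈ Finset.Icc 1 K, ε i := by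
    intro K hK
    induction K, hK using Nat.le_induction with
    | base =>
      simp only [Finset.Icc_self, Finset.sum_singleton]
      have := h1' 1 le_rfl
      norm_num at this
      linarith
    | succ K hK ih =>
      rw [my_sum_Icc_succ_top (by omega) th, my_sum_Icc_succ_top (by omega) ε]
      have := h1' (K+1) (by omega)
      simp only [Nat.add_sub_cancel] at this
      linarith
  -- weighted monotonicity bound
  have hP : ∀ K : ℕ, 1 ≤ K → (K:ℝ) * th K ≤ ∑ i ∈ Finset.Icc 1 K, th i
      + M * ∑ j ∈ Finset.Icc 2 K, ((j:ℝ) - 1) * (ε (j-1) + ε j) := by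
    intro K hK
    induction K, hK using Nat.le_induction with
    | base => simp [Finset.Icc_eq_empty (by omega : ¬ (2:ℕ) ≤ 1)]
    | succ K hK ih =>
      rw [my_sum_Icc_succ_top (by omega) th,
        my_sum_Icc_succ_top (by omega : 2 ≤ K + 1) (fun j => ((j:ℝ) - 1) * (ε (j-1) + ε j))]
      simp only [Nat.add_sub_cancel]
      have hm := h3 (K+1) (by omega)
      simp only [Nat.add_sub_cancel] at hm
      have hs := hσpos (K+1)
      have hnn := sq_nonneg (mNorm (X (K+1) - X K))
      have hKpos : (0:ℝ) ≤ (K:ℝ) := Nat.cast_nonneg K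
      have step : th (K+1) ≤ th K + M * (ε K + ε (K+1)) := by
        have h0' : 0 ≤ (1 / σ (K+1)) * mNorm (X (K+1) - X K) ^ 2 :=
          mul_nonneg (le_of_lt (one_div_pos.mpr hs)) (sq_nonneg _)
        linarith only [hm, h0']
      push_cast
      nlinarith [mul_le_mul_of_nonneg_left step hKpos]
  -- the combinatorial weight identity
  have hQ : ∀ K, 1 ≤ K → ∑ i ∈ Finset.Icc 1 K, ε i
      + ∑ j ∈ Finset.Icc 2 K, ((j:ℝ) - 1) * (ε (j-1) + ε j)
      = 2 * ∑ i ∈ Finset.Icc 1 K, (i:ℝ) * ε i - (K:ℝ) * ε K := by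
    intro K hK
    induction K, hK using Nat.le_induction with
    | base =>
      simp [Finset.Icc_eq_empty (by omega : ¬ (2:ℕ) ≤ 1)]
      ring
    | succ K hK ih =>
      rw [my_sum_Icc_succ_top (by omega) ε,
        my_sum_Icc_succ_top (by omega : 2 ≤ K + 1) (fun j => ((j:ℝ) - 1) * (ε (j-1) + ε j)),
        my_sum_Icc_succ_top (by omega) (fun i => (i:ℝ) * ε i)]
      simp only [Nat.add_sub_cancel]
      push_cast
      linarith
  -- main argument
  intro k hk
  obtain ⟨K, rfl⟩ : ∃ K, k = K + 1 := ⟨k - 1, by omega⟩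
  have hK1 : 1 ≤ K := by omega
  simp only [Nat.add_sub_cancel]
  have hcast : ((K:ℕ):ℝ) = ((K+1:ℕ):ℝ) - 1 := by push_cast; ring
  have hKpos : (0:ℝ) < (K:ℝ) := by
    have : (1:ℝ) ≤ (K:ℝ) := by exact_mod_cast hK1
    linarith
  -- bound on th K
  have hthK : (K:ℝ) * th K ≤ D 0 + 2 * M * ∑ i ∈ Finset.Icc 1 K, (i:ℝ) * ε i := by
    have p1 := hP K hK1
    have p2 := hsumD K hK1
    have p3 := hQ K hK1
    have p3' : M * ∑ i ∈ Finset.Icc 1 K, ε i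
        + M * ∑ j ∈ Finset.Icc 2 K, ((j:ℝ) - 1) * (ε (j-1) + ε j)
        = 2 * M * ∑ i ∈ Finset.Icc 1 K, (i:ℝ) * ε i - M * ((K:ℝ) * ε K) := by
      linear_combination M * p3
    have hDK : 0 ≤ D K := by
      rw [hD K]
      have hsK := hσpos K
      have : 0 ≤ 1 / (2 * σ K) := by positivity
      exact mul_nonneg this (sq_nonneg _)
    have hMK : 0 ≤ M * ((K:ℝ) * ε K) :=
      mul_nonneg hM.le (mul_nonneg (Nat.cast_nonneg K) (hεnonneg K))
    linarith
  have hKne : (K:ℝ) ≠ 0 := ne_of_gt hKpos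
  have hthK' : th K ≤ (1 / (K:ℝ)) * (D 0 + 2 * M * ∑ i ∈ Finset.Icc 1 K, (i:ℝ) * ε i) := by
    have h := mul_le_mul_of_nonneg_left hthK (le_of_lt (one_div_pos.mpr hKpos))
    calc th K = (1 / (K:ℝ)) * ((K:ℝ) * th K) := by field_simp
    _ ≤ _ := h
  -- the squared bound
  have hD0 : (1 / (2 * σ 0)) * mNorm (X 0 - Xstar) ^ 2 = D 0 := (hD 0).symm
  rw [← hcast, hD0]
  have hsq : (1 / σ (K+1)) * mNorm (X (K+1) - X K) ^ 2
      ≤ (1 / (K : ℝ)) * (D 0 + 2 * M * ∑ i ∈ Finset.Icc 1 K, (i : ℝ) * ε i)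
            + ‖ystar‖ * ε (K+1) + M * (ε K + ε (K+1)) := by
    have m1 := h3 (K+1) (by omega)
    simp only [Nat.add_sub_cancel] at m1
    have m2 := h2 (K+1) (by omega)
    linarith only [m1, m2, hthK']
  -- conclude via square roots
  have hd := hdual (K+1) (by omega)
  simp only [Nat.add_sub_cancel] at hd
  rw [hd, mNorm_smul_nonneg (le_of_lt (one_div_pos.mpr (hσpos (K+1))))]
  set t := mNorm (X (K+1) - X K) with htdef
  set B := (1 / (K : ℝ)) * (D 0 + 2 * M * ∑ i ∈ Finset.Icc 1 K, (i : ℝ) * ε i)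
            + ‖ystar‖ * ε (K+1) + M * (ε K + ε (K+1)) with hBdef
  have hsk := hσpos (K+1)
  have ht0 : 0 ≤ t := mNorm_nonneg _
  have hB0 : 0 ≤ B :=
    le_trans (mul_nonneg (le_of_lt (one_div_pos.mpr hsk)) (sq_nonneg t)) hsq
  have lhs_eq : (1 / σ (K+1)) * t = Real.sqrt ((1 / σ (K+1))^2 * t^2) := by
    rw [Real.sqrt_mul (sq_nonneg _), Real.sqrt_sq (by positivity), Real.sqrt_sq ht0]
  have rhs_eq : (1 / Real.sqrt (σ (K+1))) * Real.sqrt B = Real.sqrt ((1 / σ (K+1)) * B) := by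
    rw [Real.sqrt_mul (by positivity), one_div, one_div, Real.sqrt_inv]
  rw [lhs_eq, rhs_eq]
  apply Real.sqrt_le_sqrt
  have hexp : (1 / σ (K+1))^2 * t^2 = (1 / σ (K+1)) * ((1 / σ (K+1)) * t^2) := by ring
  rw [hexp]
  exact mul_le_mul_of_nonneg_left hsq (by positivity)
end
end

section
/- Let A : S^n → R^m be a linear map with adjoint A*, Z ∈ S^n, b ∈ R^m, and define φ : R^m → R by φ(ξ) = ½‖Π_{S^n_+}(A*ξ + Z)‖² − ⟨b, ξ⟩. Then φ is convex and differentiable on R^m, with gradient ∇φ(ξ) = A( Π_{S^n_+}(A*ξ + Z) ) − b for every ξ ∈ R^m. -/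
set_option autoImplicit false

open Matrix Finset Filter
open scoped RealInnerProductSpace

noncomputable section

/-- `P` is the (unique) nearest positive semidefinite matrix to `Z` in the Frobenius norm,
i.e. the projection of `Z` onto the PSD cone. -/
def IsProjPSD {n : ℕ} (Z P : Matrix (Fin n) (Fin n) ℝ) : Prop :=
  P.PosSemidef ∧
    ∀ Y : Matrix (Fin n) (Fin n) ℝ, Y.PosSemidef → mNorm (P - Z) ≤ mNorm (Y - Z)

/-! ### Auxiliary: identification of matrices with a Euclidean space -/

/-- The obvious linear identification of `n × n` matrices with `ℝ^(n×n)`. -/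
def toE {n : ℕ} : Matrix (Fin n) (Fin n) ℝ ≃ₗ[ℝ] EuclideanSpace ℝ (Fin n × Fin n) :=
{ toFun := fun X => WithLp.toLp 2 (fun p => X p.1 p.2),
  invFun := fun v => Matrix.of fun i j => v (i, j),
  map_add' := fun _ _ => rfl,
  map_smul' := fun _ _ => rfl,
  left_inv := fun _ => rfl,
  right_inv := fun _ => rfl }

lemma inner_toE {n : ℕ} (X Y : Matrix (Fin n) (Fin n) ℝ) :
    ⟪toE X, toE Y⟫ = mInner X Y := by
  simp [toE, mInner, PiLp.inner_apply, RCLike.inner_apply, Matrix.trace, Matrix.diag,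
    Matrix.mul_apply, Fintype.sum_prod_type, mul_comm]
  rw [Finset.sum_comm]
  rfl

lemma mNorm_toE {n : ℕ} (X : Matrix (Fin n) (Fin n) ℝ) : mNorm X = ‖toE X‖ := by
  rw [mNorm, ← inner_toE, real_inner_self_eq_norm_sq, Real.sqrt_sq (norm_nonneg _)]

/-! ### Auxiliary: PSD cone facts -/

lemma psd_add {n : ℕ} {X Y : Matrix (Fin n) (Fin n) ℝ} (hX : X.PosSemidef)
    (hY : Y.PosSemidef) : (X + Y).PosSemidef := by
  exact hX.add hY

lemma psd_smul {n : ℕ} {c : ℝ} (hc : 0 ≤ c) {X : Matrix (Fin n) (Fin n) ℝ}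
    (hX : X.PosSemidef) : (c • X).PosSemidef := by
  exact hX.smul hc

lemma psd_zero {n : ℕ} : (0 : Matrix (Fin n) (Fin n) ℝ).PosSemidef :=
  ⟨by simp [Matrix.IsHermitian], fun x => by simp⟩

/-! ### Auxiliary: projection onto a convex cone in a real inner product space -/

section Abstract
variable {E : Type*} [NormedAddCommGroup E] [InnerProductSpace ℝ E]

lemma proj_varineq {K : Set E} (hK : Convex ℝ K) {y P : E} (hP : P ∈ K)
    (hmin : ∀ k ∈ K, ‖P - y‖ ≤ ‖k - y‖) : ∀ k ∈ K, ⟪y - P, k - P⟫ ≤ 0 := by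
  have hne : Nonempty K := ⟨⟨P, hP⟩⟩
  have heq : ‖y - P‖ = ⨅ w : K, ‖y - w‖ := by
    apply le_antisymm
    · apply le_ciInf
      intro w
      rw [norm_sub_rev y P, norm_sub_rev y (w : E)]
      exact hmin w w.2
    · have hbdd : BddBelow (Set.range fun w : K => ‖y - (w : E)‖) := by
        refine ⟨0, ?_⟩
        rintro _ ⟨w, rfl⟩
        exact norm_nonneg _
      exact ciInf_le hbdd ⟨P, hP⟩
  exact (norm_eq_iInf_iff_real_inner_le_zero hK hP).mp heq

lemma residual_orth {K : Set E} (hK : Convex ℝ K)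
    (hadd : ∀ x ∈ K, ∀ z ∈ K, x + z ∈ K) (h0 : (0:E) ∈ K) {y P : E} (hP : P ∈ K)
    (hmin : ∀ k ∈ K, ‖P - y‖ ≤ ‖k - y‖) : ⟪y - P, P⟫ = 0 := by
  have h1 := proj_varineq hK hP hmin 0 h0
  have h2 := proj_varineq hK hP hmin (P + P) (hadd P hP P hP)
  simp only [zero_sub, inner_neg_right, add_sub_cancel_right] at h1 h2
  linarith

lemma residual_nonpos {K : Set E} (hK : Convex ℝ K)
    (hadd : ∀ x ∈ K, ∀ z ∈ K, x + z ∈ K) {y P : E} (hP : P ∈ K)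
    (hmin : ∀ k ∈ K, ‖P - y‖ ≤ ‖k - y‖) : ∀ k ∈ K, ⟪y - P, k⟫ ≤ 0 := by
  intro k hk
  have := proj_varineq hK hP hmin (k + P) (hadd k hk P hP)
  simpa using this

variable {K : Set E} (hK : Convex ℝ K) (hadd : ∀ x ∈ K, ∀ z ∈ K, x + z ∈ K)
  (h0 : (0:E) ∈ K) {p : E → E}
  (hp : ∀ y, p y ∈ K ∧ ∀ k ∈ K, ‖p y - y‖ ≤ ‖k - y‖)

include hK hadd h0 hp

lemma psi_lower (y w : E) :
    (1/2) * ‖p y‖^2 + ⟪p y, w - y⟫ ≤ (1/2) * ‖p w‖^2 := by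
  have h1 : ⟪y - p y, p y⟫ = 0 := residual_orth hK hadd h0 (hp y).1 (hp y).2
  have h2 : ⟪w - p w, p y⟫ ≤ 0 := residual_nonpos hK hadd (hp w).1 (hp w).2 (p y) (hp y).1
  have h3 : (0:ℝ) ≤ ‖p w - p y‖^2 := sq_nonneg _
  rw [inner_sub_left] at h1 h2
  rw [norm_sub_sq_real] at h3
  rw [inner_sub_right]
  have hpy : ⟪p y, p y⟫ = ‖p y‖^2 := real_inner_self_eq_norm_sq _
  have hc1 : ⟪p y, w⟫ = ⟪w, p y⟫ := real_inner_comm _ _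
  have hc2 : ⟪p y, y⟫ = ⟪y, p y⟫ := real_inner_comm _ _
  linarith

omit hadd h0 in
lemma proj_firm (y w : E) : ‖p w - p y‖^2 ≤ ⟪w - y, p w - p y⟫ := by
  have a := proj_varineq hK (hp y).1 (hp y).2 (p w) (hp w).1
  have b := proj_varineq hK (hp w).1 (hp w).2 (p y) (hp y).1
  simp only [inner_sub_left, inner_sub_right] at a b ⊢
  rw [← real_inner_self_eq_norm_sq]
  simp only [inner_sub_left, inner_sub_right]
  have c1 : ⟪p y, p w⟫ = ⟪p w, p y⟫ := real_inner_comm _ _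
  linarith

lemma psi_upper (y w : E) :
    (1/2) * ‖p w‖^2 - (1/2) * ‖p y‖^2 - ⟪p y, w - y⟫ ≤ ‖w - y‖^2 := by
  have hl := psi_lower hK hadd h0 hp w y
  have hf := proj_firm hK hp y w
  have hcs : ⟪w - y, p w - p y⟫ ≤ ‖w - y‖ * ‖p w - p y‖ := real_inner_le_norm _ _
  have hne : ‖p w - p y‖ ≤ ‖w - y‖ := by
    nlinarith [norm_nonneg (p w - p y), norm_nonneg (w - y)]
  have hub : ⟪w - y, p w - p y⟫ ≤ ‖w - y‖^2 := by
    nlinarith [norm_nonneg (p w - p y), norm_nonneg (w - y)]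
  have hswap : ⟪p w, y - w⟫ = - ⟪p w, w - y⟫ := by
    rw [show y - w = -(w - y) by abel, inner_neg_right]
  rw [hswap] at hl
  have hexp : ⟪w - y, p w - p y⟫ = ⟪p w, w - y⟫ - ⟪p y, w - y⟫ := by
    rw [inner_sub_right, real_inner_comm (w - y) (p w), real_inner_comm (w - y) (p y)]
  linarith

end Abstract

/-- the dual function `φ(ξ) = ½‖Π_{S^n_+}(A*ξ + Z)‖² − ⟨b, ξ⟩` is convex and
differentiable, with gradient `∇φ(ξ) = A(Π_{S^n_+}(A*ξ + Z)) − b`. -/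
theorem phi_convex_and_gradient {n m : ℕ}
    (A : Matrix (Fin n) (Fin n) ℝ →ₗ[ℝ] Vec m)
    (Aadj : Vec m →ₗ[ℝ] Matrix (Fin n) (Fin n) ℝ)
    (hadj : ∀ (X : Matrix (Fin n) (Fin n) ℝ) (ξ : Vec m), ⟪A X, ξ⟫ = mInner X (Aadj ξ))
    (hAadjSymm : ∀ ξ : Vec m, (Aadj ξ).IsSymm)
    (Z : Matrix (Fin n) (Fin n) ℝ) (hZ : Z.IsSymm) (b : Vec m)
    (proj : Matrix (Fin n) (Fin n) ℝ → Matrix (Fin n) (Fin n) ℝ)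
    (hproj : ∀ Y : Matrix (Fin n) (Fin n) ℝ, IsProjPSD Y (proj Y)) :
    let φ : Vec m → ℝ := fun ξ => (1 / 2) * mNorm (proj (Aadj ξ + Z)) ^ 2 - ⟪b, ξ⟫
    ConvexOn ℝ Set.univ φ ∧
      ∀ ξ : Vec m, HasGradientAt φ (A (proj (Aadj ξ + Z)) - b) ξ := by
  intro φ
  classical
  -- the PSD cone, seen inside Euclidean space
  set K : Set (EuclideanSpace ℝ (Fin n × Fin n)) :=
    {v | (toE.symm v).PosSemidef} with hKdef
  have hK : Convex ℝ K := by
    intro x hx y hy a c ha hc hac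
    show (toE.symm (a • x + c • y)).PosSemidef
    rw [map_add, _root_.map_smul, _root_.map_smul]
    exact psd_add (psd_smul ha hx) (psd_smul hc hy)
  have hadd : ∀ x ∈ K, ∀ z ∈ K, x + z ∈ K := by
    intro x hx z hz
    show (toE.symm (x + z)).PosSemidef
    rw [map_add]
    exact psd_add hx hz
  have h0 : (0 : EuclideanSpace ℝ (Fin n × Fin n)) ∈ K := by
    show (toE.symm 0).PosSemidef
    rw [map_zero]
    exact psd_zero
  -- the projection, transported to Euclidean space
  set p : EuclideanSpace ℝ (Fin n × Fin n) → EuclideanSpace ℝ (Fin n × Fin n) :=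
    fun v => toE (proj (toE.symm v)) with hpdef
  have hp : ∀ v, p v ∈ K ∧ ∀ k ∈ K, ‖p v - v‖ ≤ ‖k - v‖ := by
    intro v
    obtain ⟨hpsd, hmin⟩ := hproj (toE.symm v)
    constructor
    · show (toE.symm (toE _)).PosSemidef
      rw [LinearEquiv.symm_apply_apply]
      exact hpsd
    · intro k hk
      have h := hmin (toE.symm k) hk
      rw [mNorm_toE, mNorm_toE, map_sub, map_sub, LinearEquiv.apply_symm_apply,
        LinearEquiv.apply_symm_apply] at h
      exact h
  -- the affine map
  set Yf : Vec m → EuclideanSpace ℝ (Fin n × Fin n) :=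
    fun ξ => toE (Aadj ξ + Z) with hYfdef
  have hpYf : ∀ ξ, p (Yf ξ) = toE (proj (Aadj ξ + Z)) := by
    intro ξ
    simp only [hpdef, hYfdef, LinearEquiv.symm_apply_apply]
  have hφ : ∀ ξ, φ ξ = (1/2) * ‖p (Yf ξ)‖^2 - ⟪b, ξ⟫ := by
    intro ξ
    simp only [φ]
    rw [mNorm_toE, hpYf]
  have haff : ∀ (a c : ℝ), a + c = 1 → ∀ (x y : Vec m),
      Yf (a • x + c • y) = a • Yf x + c • Yf y := by
    intro a c hac x y
    simp only [hYfdef]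
    rw [← _root_.map_smul, ← _root_.map_smul, ← map_add]
    congr 1
    have hz : a • Z + c • Z = Z := by rw [← add_smul, hac, one_smul]
    calc Aadj (a • x + c • y) + Z = a • Aadj x + c • Aadj y + Z := by
          rw [map_add, _root_.map_smul, _root_.map_smul]
      _ = a • Aadj x + c • Aadj y + (a • Z + c • Z) := by rw [hz]
      _ = a • (Aadj x + Z) + c • (Aadj y + Z) := by
          rw [smul_add, smul_add]; abel
  constructor
  · -- convexity
    refine ⟨convex_univ, ?_⟩
    intro x _ y _ a c ha hc hac
    have h1 := psi_lower hK hadd h0 hp (Yf (a • x + c • y)) (Yf x)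
    have h2 := psi_lower hK hadd h0 hp (Yf (a • x + c • y)) (Yf y)
    have m1 := mul_le_mul_of_nonneg_left h1 ha
    have m2 := mul_le_mul_of_nonneg_left h2 hc
    have hsum : a * ⟪p (Yf (a • x + c • y)), Yf x - Yf (a • x + c • y)⟫
        + c * ⟪p (Yf (a • x + c • y)), Yf y - Yf (a • x + c • y)⟫ = 0 := by
      rw [← real_inner_smul_right, ← real_inner_smul_right, ← inner_add_right]
      have hzero : a • (Yf x - Yf (a • x + c • y)) + c • (Yf y - Yf (a • x + c • y)) = 0 := by
        have h' : a • Yf x + c • Yf y = Yf (a • x + c • y) := (haff a c hac x y).symm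
        rw [smul_sub, smul_sub,
          show a • Yf x - a • Yf (a • x + c • y) + (c • Yf y - c • Yf (a • x + c • y))
            = (a • Yf x + c • Yf y) - ((a + c) • Yf (a • x + c • y)) from by
              rw [add_smul]; abel,
          hac, one_smul, h', sub_self]
      rw [hzero, inner_zero_right]
    have hbz : ⟪b, a • x + c • y⟫ = a * ⟪b, x⟫ + c * ⟪b, y⟫ := by
      rw [inner_add_right, real_inner_smul_right, real_inner_smul_right]
    have hsplit : a * ((1/2) * ‖p (Yf (a • x + c • y))‖^2)
        + c * ((1/2) * ‖p (Yf (a • x + c • y))‖^2)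
        = (1/2) * ‖p (Yf (a • x + c • y))‖^2 := by
      rw [← add_mul, hac, one_mul]
    simp only [smul_eq_mul]
    rw [hφ x, hφ y, hφ (a • x + c • y)]
    linarith
  · -- gradient
    intro ξ
    rw [hasGradientAt_iff_isLittleO]
    set T : Vec m →L[ℝ] EuclideanSpace ℝ (Fin n × Fin n) :=
      LinearMap.toContinuousLinearMap ((toE : Matrix (Fin n) (Fin n) ℝ ≃ₗ[ℝ]
        EuclideanSpace ℝ (Fin n × Fin n)).toLinearMap ∘ₗ Aadj) with hTdef
    have hdY : ∀ ζ, Yf ζ - Yf ξ = toE (Aadj (ζ - ξ)) := by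
      intro ζ
      simp only [hYfdef]
      rw [← map_sub toE (Aadj ζ + Z) (Aadj ξ + Z), map_sub Aadj]
      congr 1
      abel
    have hYsub : ∀ ζ, Yf ζ - Yf ξ = T (ζ - ξ) := by
      intro ζ
      rw [hdY ζ]
      simp only [hTdef, LinearMap.coe_toContinuousLinearMap', LinearMap.comp_apply,
        LinearEquiv.coe_coe]
    have hinner : ∀ ζ, ⟪A (proj (Aadj ξ + Z)) - b, ζ - ξ⟫
        = ⟪p (Yf ξ), Yf ζ - Yf ξ⟫ - ⟪b, ζ - ξ⟫ := by
      intro ζ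
      rw [inner_sub_left, hadj, ← inner_toE, ← hpYf, hdY ζ]
    have hdiff : ∀ ζ, φ ζ - φ ξ - ⟪A (proj (Aadj ξ + Z)) - b, ζ - ξ⟫
        = (1/2) * ‖p (Yf ζ)‖^2 - (1/2) * ‖p (Yf ξ)‖^2 - ⟪p (Yf ξ), Yf ζ - Yf ξ⟫ := by
      intro ζ
      rw [hφ ζ, hφ ξ, hinner ζ]
      simp only [inner_sub_right]
      ring
    rw [Asymptotics.isLittleO_iff]
    intro ε hε
    have hCpos : (0:ℝ) < ‖T‖^2 + 1 := by positivity
    filter_upwards [Metric.closedBall_mem_nhds ξ (div_pos hε hCpos)] with ζ hζ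
    rw [Metric.mem_closedBall, dist_eq_norm] at hζ
    have hlow : 0 ≤ φ ζ - φ ξ - ⟪A (proj (Aadj ξ + Z)) - b, ζ - ξ⟫ := by
      rw [hdiff ζ]
      have := psi_lower hK hadd h0 hp (Yf ξ) (Yf ζ)
      linarith
    have hup : φ ζ - φ ξ - ⟪A (proj (Aadj ξ + Z)) - b, ζ - ξ⟫ ≤ ‖Yf ζ - Yf ξ‖^2 := by
      rw [hdiff ζ]
      exact psi_upper hK hadd h0 hp (Yf ξ) (Yf ζ)
    have hT : ‖Yf ζ - Yf ξ‖ ≤ ‖T‖ * ‖ζ - ξ‖ := by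
      rw [hYsub ζ]
      exact T.le_opNorm _
    rw [Real.norm_eq_abs, abs_of_nonneg hlow]
    have h1 : ‖Yf ζ - Yf ξ‖^2 ≤ (‖T‖ * ‖ζ - ξ‖)^2 :=
      pow_le_pow_left₀ (norm_nonneg _) hT 2
    have h2 : (‖T‖ * ‖ζ - ξ‖)^2 ≤ (‖T‖^2 + 1) * (‖ζ - ξ‖ * ‖ζ - ξ‖) := by
      calc (‖T‖ * ‖ζ - ξ‖)^2 = ‖T‖^2 * (‖ζ - ξ‖ * ‖ζ - ξ‖) := by ring
        _ ≤ (‖T‖^2 + 1) * (‖ζ - ξ‖ * ‖ζ - ξ‖) := by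
            apply mul_le_mul_of_nonneg_right (by linarith) (mul_self_nonneg _)
    have h3 : (‖T‖^2 + 1) * (‖ζ - ξ‖ * ‖ζ - ξ‖) ≤ (‖T‖^2 + 1) * ((ε / (‖T‖^2 + 1)) * ‖ζ - ξ‖) := by
      apply mul_le_mul_of_nonneg_left _ (le_of_lt hCpos)
      exact mul_le_mul_of_nonneg_right hζ (norm_nonneg _)
    have h4 : (‖T‖^2 + 1) * ((ε / (‖T‖^2 + 1)) * ‖ζ - ξ‖) = ε * ‖ζ - ξ‖ := by
      field_simp
    linarith
end
end
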